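/- Let φ be a discrete field satisfying the BDdV update rule: for all n ∈ ℤ and j ∈ ZMod N, R(n,j) = 0, i.e. φ_{n+1}^j = −φ_{n−1}^j + (φ_n^j + φ_n^{j+σ_n}) / (1 + (δ²/8)·(2 + (φ_n^j)² + (φ_n^{j+σ_n})²)). Then the total discrete energy is exactly conserved: Q₊(n) = Q₊(m) for all n, m ∈ ℤ, where Q₊(n) = δ·Σ_{j ∈ ZMod N} T⁰⁰₊(n,j). -/

import Mathlib

/-- `σ_n = 1` if `n` is odd, `−1` if `n` is even. -/
def sgm (n : ℤ) : ℤ := if Odd n then 1 else -1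

/-- The two discrete energy densities `T⁰⁰_±` of the BDdV scheme
(`s = 1` gives `T⁰⁰₊`, `s = −1` gives `T⁰⁰₋`). -/
noncomputable def T00BDdV (N : ℕ) (δ : ℝ) (φ : ℤ → ZMod N → ℝ)
    (s : ℤ) (n : ℤ) (j : ZMod N) : ℝ :=
  ((φ (n + s) j - φ n j)^2 + (φ (n + s) j - φ n (j + (sgm n : ZMod N)))^2) / (2 * δ^2)
    - 1/4
    + (1/8) * (1 + (φ (n + s) j)^2)
        * (2 + (φ n j)^2 + (φ n (j + (sgm n : ZMod N)))^2)

/-- The residue `R(n,j)` of the BDdV scheme; the BDdV update rule is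
`R(n,j) = 0`. -/
noncomputable def Rres (N : ℕ) (δ : ℝ) (φ : ℤ → ZMod N → ℝ)
    (n : ℤ) (j : ZMod N) : ℝ :=
  (φ (n + 1) j + φ (n - 1) j)
      * (1 + (δ^2 / 8) * (2 + (φ n j)^2 + (φ n (j + (sgm n : ZMod N)))^2))
    - φ n j - φ n (j + (sgm n : ZMod N))

/-- The discrete total energy `Q₊(n) = δ Σ_j T⁰⁰₊(n,j)`. -/
noncomputable def Qplus (N : ℕ) [NeZero N] (δ : ℝ) (φ : ℤ → ZMod N → ℝ)
    (n : ℤ) : ℝ :=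
  δ * ∑ j : ZMod N, T00BDdV N δ φ 1 n j

/-- Key algebraic identity: the residue being zero makes the forward and
backward energy densities agree. -/
lemma keyalg (δ a a' b c : ℝ) (hδ : δ ≠ 0)
    (hR : (b + c) * (1 + (δ^2/8)*(2 + a^2 + a'^2)) - a - a' = 0) :
    ((b-a)^2+(b-a')^2)/(2*δ^2) - 1/4 + (1/8)*(1+b^2)*(2+a^2+a'^2)
    = ((c-a)^2+(c-a')^2)/(2*δ^2) - 1/4 + (1/8)*(1+c^2)*(2+a^2+a'^2) := by
  have h2 : δ^2 ≠ 0 := pow_ne_zero 2 hδ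
  field_simp
  linear_combination (64*(b-c)) * hR

lemma sgm_succ (n : ℤ) : sgm (n + 1) = - sgm n := by
  rcases Int.even_or_odd n with h | h
  · have h1 : Odd (n+1) := h.add_one
    have h2 : ¬ Odd n := Int.not_odd_iff_even.mpr h
    simp [sgm, h1, h2]
  · have h1 : ¬ Odd (n+1) := by simpa [Int.not_odd_iff_even] using h.add_one
    simp [sgm, h1, h]

/-- Local (on-site) part of the energy density. -/
noncomputable def Lloc (N : ℕ) (δ : ℝ) (φ : ℤ → ZMod N → ℝ) (n : ℤ) (j : ZMod N) : ℝ :=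
  (φ (n+1) j - φ n j)^2/(2*δ^2) + (φ n j)^2/8 + (φ (n+1) j)^2/8
    + (φ n j)^2*(φ (n+1) j)^2/8

/-- Cross (link) part of the energy density. -/
noncomputable def Ccr (N : ℕ) (δ : ℝ) (φ : ℤ → ZMod N → ℝ) (n : ℤ) (σ : ZMod N)
    (j : ZMod N) : ℝ :=
  (φ (n+1) j - φ n (j+σ))^2/(2*δ^2) + (φ n (j+σ))^2/8 + (φ (n+1) j)^2/8
    + (φ (n+1) j)^2*(φ n (j+σ))^2/8

/-- If the discrete field satisfies the BDdV update rule `R(n,j) = 0`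
everywhere, then the total discrete energy is exactly conserved. -/
theorem BDdV_total_energy_conserved
    (N : ℕ) [NeZero N] (δ : ℝ) (hδ : 0 < δ)
    (φ : ℤ → ZMod N → ℝ)
    (hR : ∀ (n : ℤ) (j : ZMod N), Rres N δ φ n j = 0) :
    ∀ n m : ℤ, Qplus N δ φ n = Qplus N δ φ m := by
  have hδ' : δ ≠ 0 := ne_of_gt hδ
  -- forward and backward densities agree pointwise
  have hpm : ∀ (m : ℤ) (j : ZMod N), T00BDdV N δ φ 1 m j = T00BDdV N δ φ (-1) m j := by
    intro m j
    have h := hR m j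
    unfold Rres at h
    unfold T00BDdV
    have hm : m + (-1 : ℤ) = m - 1 := by ring
    rw [hm]
    exact keyalg δ (φ m j) (φ m (j + (sgm m : ZMod N))) (φ (m+1) j) (φ (m-1) j) hδ' h
  -- summed backward density at n+1 equals summed forward density at n
  have hshift : ∀ n : ℤ,
      (∑ j : ZMod N, T00BDdV N δ φ (-1) (n+1) j) = ∑ j : ZMod N, T00BDdV N δ φ 1 n j := by
    intro n
    have hs : ((sgm (n+1) : ℤ) : ZMod N) = -((sgm n : ℤ) : ZMod N) := by
      rw [sgm_succ]; push_cast; ring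
    have h1 : ∀ j : ZMod N, T00BDdV N δ φ 1 n j
        = Lloc N δ φ n j + Ccr N δ φ n ((sgm n : ZMod N)) j := by
      intro j
      unfold T00BDdV Lloc Ccr
      field_simp
      ring
    have h2 : ∀ j : ZMod N, T00BDdV N δ φ (-1) (n+1) j
        = Lloc N δ φ n j + Ccr N δ φ n ((sgm n : ZMod N)) (j + (-(sgm n : ZMod N))) := by
      intro j
      have hn : n + 1 + (-1 : ℤ) = n := by ring
      unfold T00BDdV Lloc Ccr
      rw [hn, hs]
      have hj : j + -((sgm n : ℤ) : ZMod N) + ((sgm n : ℤ) : ZMod N) = j := by ring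
      rw [hj]
      field_simp
      ring
    calc (∑ j : ZMod N, T00BDdV N δ φ (-1) (n+1) j)
        = ∑ j : ZMod N, (Lloc N δ φ n j
            + Ccr N δ φ n ((sgm n : ZMod N)) (j + (-(sgm n : ZMod N)))) := by
          exact Finset.sum_congr rfl (fun j _ => h2 j)
      _ = (∑ j : ZMod N, Lloc N δ φ n j)
            + ∑ j : ZMod N, Ccr N δ φ n ((sgm n : ZMod N)) (j + (-(sgm n : ZMod N))) :=
          Finset.sum_add_distrib
      _ = (∑ j : ZMod N, Lloc N δ φ n j)
            + ∑ j : ZMod N, Ccr N δ φ n ((sgm n : ZMod N)) j := by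
          congr 1
          exact Equiv.sum_comp (Equiv.addRight (-((sgm n : ℤ) : ZMod N)))
            (Ccr N δ φ n ((sgm n : ZMod N)))
      _ = ∑ j : ZMod N, (Lloc N δ φ n j + Ccr N δ φ n ((sgm n : ZMod N)) j) :=
          Finset.sum_add_distrib.symm
      _ = ∑ j : ZMod N, T00BDdV N δ φ 1 n j :=
          Finset.sum_congr rfl (fun j _ => (h1 j).symm)
  have hstep : ∀ n : ℤ, Qplus N δ φ (n+1) = Qplus N δ φ n := by
    intro n
    unfold Qplus
    congr 1
    rw [Finset.sum_congr rfl (fun j _ => hpm (n+1) j)]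
    exact hshift n
  have hzero : ∀ m : ℤ, Qplus N δ φ m = Qplus N δ φ 0 := by
    intro m
    induction m using Int.induction_on with
    | zero => rfl
    | succ k ih => rw [hstep]; exact ih
    | pred k ih =>
      have h := hstep (-(k:ℤ) - 1)
      rw [show (-(k:ℤ) - 1) + 1 = -(k:ℤ) by ring] at h
      rw [← h]
      exact ih
  intro n m
  rw [hzero n, hzero m]
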